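/- Let k, n be integers with k ≥ 1 and k ≤ n < 2^k − 1. Then there exists a perfect factor PF(n, k) all of whose sequences have even weight. -/

import Mathlib

def IsPF (n k Δ : ℕ) (F : Fin Δ → (ZMod (2 ^ k) → ZMod 2)) : Prop :=
  ∀ x : Fin n → ZMod 2,
    ∃! p : Fin Δ × ZMod (2 ^ k),
      ∀ i : Fin n, F p.1 (p.2 + (i : ℕ)) = x i

noncomputable def seqWeight {N : ℕ} (s : ZMod N → ZMod 2) : ℕ :=
  {i : ZMod N | s i = 1}.ncard


namespace PF18F

variable {k : ℕ}

noncomputable instance (k : ℕ) : Fintype (GaloisField 2 k) := Fintype.ofFinite _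

lemma card_Fq (hk : k ≠ 0) : Fintype.card (GaloisField 2 k) = 2 ^ k := by
  rw [← Nat.card_eq_fintype_card]
  exact GaloisField.card 2 k hk

lemma exists_pow_eq (g : (GaloisField 2 k)ˣ)
    (hg : ∀ x : (GaloisField 2 k)ˣ, x ∈ Subgroup.zpowers g)
    (x : GaloisField 2 k) (hx : x ≠ 0) : ∃ i : ℕ, ((g : GaloisField 2 k)) ^ i = x := by
  have hu := hg (Units.mk0 x hx)
  rw [← mem_powers_iff_mem_zpowers] at hu
  obtain ⟨i, hi⟩ := hu
  refine ⟨i, ?_⟩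
  have h2 : ((g ^ i : (GaloisField 2 k)ˣ) : GaloisField 2 k) = x := by
    have h3 : (g ^ i : (GaloisField 2 k)ˣ) = Units.mk0 x hx := hi
    rw [h3]
    rfl
  rw [← h2, Units.val_pow_eq_pow_val]

lemma powers_span (hk : k ≠ 0) (g : (GaloisField 2 k)ˣ)
    (hg : ∀ x : (GaloisField 2 k)ˣ, x ∈ Subgroup.zpowers g) :
    Submodule.span (ZMod 2) ((fun i : ℕ => ((g : GaloisField 2 k)) ^ i) '' (Set.Iio k)) = ⊤ := by
  classical
  set Fq := GaloisField 2 k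
  set W : Submodule (ZMod 2) Fq :=
    Submodule.span (ZMod 2) ((fun i : ℕ => ((g : Fq)) ^ i) '' (Set.Iio k)) with hW
  have hfr : Module.finrank (ZMod 2) Fq = k := GaloisField.finrank 2 hk
  have hni : ¬ LinearIndependent (ZMod 2) (fun i : Fin (k+1) => ((g : Fq)) ^ (i : ℕ)) := by
    intro hli
    have := hli.fintype_card_le_finrank
    rw [hfr, Fintype.card_fin] at this
    omega
  rw [Fintype.not_linearIndependent_iff] at hni
  obtain ⟨c, hsum, ⟨i₀, hi₀⟩⟩ := hni
  have hne : (Finset.filter (fun i => c i ≠ 0) Finset.univ).Nonempty := ⟨i₀, by simp [hi₀]⟩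
  set r := (Finset.filter (fun i => c i ≠ 0) Finset.univ).max' hne with hr
  have hcr : c r ≠ 0 := by
    have := (Finset.filter (fun i => c i ≠ 0) Finset.univ).max'_mem hne
    simpa using this
  have hcr1 : c r = 1 := by
    rcases (by decide : ∀ a : ZMod 2, a = 0 ∨ a = 1) (c r) with h | h
    · exact absurd h hcr
    · exact h
  have hmax : ∀ i, c i ≠ 0 → i ≤ r := by
    intro i hi
    exact Finset.le_max' _ i (by simp [hi])
  set V : Submodule (ZMod 2) Fq :=
    Submodule.span (ZMod 2) ((fun i : ℕ => ((g : Fq)) ^ i) '' (Set.Iio (r : ℕ))) with hV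
  have hgr : ((g : Fq)) ^ (r : ℕ) ∈ V := by
    have hsplit : ((g : Fq)) ^ (r : ℕ)
        = ∑ i ∈ Finset.univ.erase r, c i • ((g : Fq)) ^ (i : ℕ) := by
      have h1 : (0:Fq) = c r • ((g : Fq)) ^ (r : ℕ)
          + ∑ i ∈ Finset.univ.erase r, c i • ((g : Fq)) ^ (i : ℕ) := by
        rw [← Finset.add_sum_erase _ _ (Finset.mem_univ r)] at hsum
        exact hsum.symm
      rw [hcr1, one_smul] at h1
      have h2 := eq_neg_of_add_eq_zero_left h1.symm
      rw [h2, ← neg_one_smul (ZMod 2), show (-1 : ZMod 2) = 1 by decide, one_smul]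
    rw [hsplit]
    apply Submodule.sum_mem
    intro i hi
    by_cases hci : c i = 0
    · rw [hci, zero_smul]
      exact Submodule.zero_mem _
    · apply Submodule.smul_mem
      apply Submodule.subset_span
      refine ⟨(i : ℕ), ?_, rfl⟩
      have hir : i ≠ r := (Finset.mem_erase.mp hi).1
      have : (i:ℕ) < (r:ℕ) := by
        rcases lt_or_eq_of_le (hmax i hci) with h | h
        · exact h
        · exact absurd h hir
      simpa using this
  -- multiplication by g preserves V
  have hmul : ∀ w ∈ V, ((g : Fq)) * w ∈ V := by
    have hle : V ≤ V.comap (LinearMap.mulLeft (ZMod 2) ((g : Fq))) := by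
      rw [hV, Submodule.span_le]
      rintro y ⟨i, hik, rfl⟩
      simp only [Submodule.mem_comap, LinearMap.mulLeft_apply]
      show ((g : Fq)) * ((g : Fq)) ^ i ∈ V
      have hpow : ((g : Fq)) * ((g : Fq)) ^ i = ((g : Fq)) ^ (i + 1) := by
        rw [pow_succ]; ring
      rw [hpow]
      rcases Nat.lt_or_ge (i + 1) (r : ℕ) with h | h
      · exact Submodule.subset_span ⟨i + 1, by simpa using h, rfl⟩
      · have : i + 1 = (r : ℕ) := by
          have : i < (r : ℕ) := by simpa using hik
          omega
        rw [this]
        exact hgr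
    intro w hw
    exact hle hw
  have hall : ∀ i : ℕ, ((g : Fq)) ^ i ∈ V := by
    intro i
    induction i with
    | zero =>
      rcases Nat.eq_zero_or_pos (r : ℕ) with h0 | h0
      · have : ((g : Fq)) ^ (0:ℕ) = ((g : Fq)) ^ (r : ℕ) := by rw [h0]
        rw [this]
        exact hgr
      · exact Submodule.subset_span ⟨0, by simpa using h0, rfl⟩
    | succ i ih =>
      have := hmul _ ih
      rwa [show ((g : Fq)) * ((g : Fq)) ^ i = ((g : Fq)) ^ (i + 1) by rw [pow_succ]; ring] at this
  rw [eq_top_iff]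
  intro x _
  have hVW : V ≤ W := by
    apply Submodule.span_mono
    apply Set.image_mono
    intro i hi
    have h1 : i < (r : ℕ) := hi
    have h2 : (r : ℕ) ≤ k := Nat.lt_succ_iff.mp r.isLt
    exact lt_of_lt_of_le h1 h2
  by_cases hx : x = 0
  · rw [hx]; exact Submodule.zero_mem _
  · obtain ⟨i, hi⟩ := exists_pow_eq g hg x hx
    exact hVW (hi ▸ hall i)

/-- Key linear-algebra lemma -/
lemma KLA (hk : k ≠ 0) (g : (GaloisField 2 k)ˣ)
    (hg : ∀ x : (GaloisField 2 k)ˣ, x ∈ Subgroup.zpowers g) {x₀ : GaloisField 2 k}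
    (htr : ∀ i, i < k →
      Algebra.trace (ZMod 2) (GaloisField 2 k) (((g : GaloisField 2 k)) ^ i * x₀) = 0) :
    x₀ = 0 := by
  set L : (GaloisField 2 k) →ₗ[ZMod 2] ZMod 2 :=
    { toFun := fun y => Algebra.trace (ZMod 2) (GaloisField 2 k) (y * x₀)
      map_add' := by intro a b; rw [add_mul, map_add]
      map_smul' := by intro m a; rw [smul_mul_assoc, map_smul]; rfl } with hL
  have hker : Submodule.span (ZMod 2) ((fun i : ℕ => ((g : (GaloisField 2 k))) ^ i) '' (Set.Iio k))
      ≤ LinearMap.ker L := by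
    rw [Submodule.span_le]
    rintro y ⟨i, hik, rfl⟩
    refine LinearMap.mem_ker.mpr ?_
    show Algebra.trace (ZMod 2) (GaloisField 2 k) (((g : (GaloisField 2 k))) ^ i * x₀) = 0
    exact htr i hik
  rw [powers_span hk g hg] at hker
  have hall : ∀ y : (GaloisField 2 k), Algebra.trace (ZMod 2) (GaloisField 2 k) (x₀ * y) = 0 := by
    intro y
    have := hker (Submodule.mem_top (x := y))
    rw [LinearMap.mem_ker] at this
    rw [mul_comm]
    exact this
  have hnd := traceForm_nondegenerate (ZMod 2) (GaloisField 2 k)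
  apply hnd.1
  intro y
  rw [Algebra.traceForm_apply]
  exact hall y

end PF18F

namespace DB

abbrev Fq (k : ℕ) := GaloisField 2 k
abbrev M (k : ℕ) := 2 ^ k - 1

noncomputable def trc {k : ℕ} (y : Fq k) : ZMod 2 := Algebra.trace (ZMod 2) (Fq k) y

noncomputable def pw {k : ℕ} (g : (Fq k)ˣ) (n : ℕ) : Fq k := ((g ^ n : (Fq k)ˣ) : Fq k)

variable {k : ℕ} (g : (Fq k)ˣ)

lemma two_pow_big (hk : 2 ≤ k) : 4 ≤ 2 ^ k := by
  calc (4:ℕ) = 2 ^ 2 := by norm_num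
    _ ≤ 2 ^ k := Nat.pow_le_pow_right (by norm_num) hk

lemma neZeroM (hk : 2 ≤ k) : NeZero (M k) := by
  have := two_pow_big (k := k) hk
  refine ⟨?_⟩
  show 2 ^ k - 1 ≠ 0
  omega

lemma pw_add (a b : ℕ) : pw g (a + b) = pw g a * pw g b := by
  rw [pw, pw, pw, pow_add, Units.val_mul]

lemma pw_eq_pow (i : ℕ) : pw g i = ((g : Fq k)) ^ i := by
  rw [pw, Units.val_pow_eq_pow_val]

lemma pw_pow (a i : ℕ) : pw g a * ((g : Fq k)) ^ i = pw g (a + i) := by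
  rw [pw_add, pw_eq_pow g i]

lemma trc_sub (a b : Fq k) : trc (a - b) = trc a - trc b :=
  map_sub (Algebra.trace (ZMod 2) (Fq k)) a b

lemma trc_add (a b : Fq k) : trc (a + b) = trc a + trc b :=
  map_add (Algebra.trace (ZMod 2) (Fq k)) a b

lemma pw_ne (n : ℕ) : pw g n ≠ 0 := Units.ne_zero _

lemma pw_modEq (hord : orderOf g = M k) {a b : ℕ} (h : a ≡ b [MOD M k]) :
    pw g a = pw g b := by
  rw [pw, pw]
  congr 1
  rw [pow_eq_pow_iff_modEq, hord]
  exact h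

/-- the m-sequence with base exponent `b` -/
noncomputable def seq (b : ℕ) : ZMod (M k) → ZMod 2 := fun z => trc (pw g (b + z.val))

lemma seq_at (hk : 2 ≤ k) (hord : orderOf g = M k) (b : ℕ) (z : ZMod (M k)) (i : ℕ) :
    seq g b (z + (i : ℕ)) = trc (pw g (b + z.val + i)) := by
  haveI : NeZero (M k) := neZeroM hk
  show trc (pw g (b + (z + ((i : ℕ) : ZMod (M k))).val)) = _
  congr 1
  apply pw_modEq g hord
  have h1 : (z + (i : ℕ)).val = (z.val + i) % M k := by
    have h2 : z + ((i : ℕ) : ZMod (M k)) = ((z.val + i : ℕ) : ZMod (M k)) := by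
      push_cast [ZMod.natCast_rightInverse z]
      ring
    rw [h2, ZMod.val_natCast]
  rw [h1]
  have h3 : (z.val + i) % M k ≡ z.val + i [MOD M k] := Nat.mod_modEq _ _
  simpa [← add_assoc] using h3.add_left b

lemma KLA' (hk : 2 ≤ k) (hg : ∀ x : (Fq k)ˣ, x ∈ Subgroup.zpowers g) {y : Fq k}
    (h : ∀ i, i < k → trc (y * ((g : Fq k)) ^ i) = 0) : y = 0 := by
  refine PF18F.KLA (by omega) g hg (fun i hik => ?_)
  rw [mul_comm]
  exact h i hik

lemma seq_win_inj (hk : 2 ≤ k) (hg : ∀ x : (Fq k)ˣ, x ∈ Subgroup.zpowers g)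
    (hord : orderOf g = M k) (b : ℕ) {z z' : ZMod (M k)}
    (h : ∀ i : Fin k, seq g b (z + ((i : ℕ) : ZMod (M k))) = seq g b (z' + ((i : ℕ) : ZMod (M k)))) :
    z = z' := by
  haveI : NeZero (M k) := neZeroM hk
  have hdiff : pw g (b + z.val) - pw g (b + z'.val) = 0 := by
    apply KLA' g hk hg
    intro i hik
    rw [sub_mul, trc_sub]
    have h1 : seq g b (z + ((i : ℕ) : ZMod (M k))) = seq g b (z' + ((i : ℕ) : ZMod (M k))) :=
      h ⟨i, hik⟩
    rw [seq_at g hk hord, seq_at g hk hord] at h1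
    rw [pw_pow, pw_pow, h1, sub_self]
  have heq : pw g (b + z.val) = pw g (b + z'.val) := by
    have := sub_eq_zero.mp hdiff
    exact this
  have hu : g ^ (b + z.val) = g ^ (b + z'.val) := Units.ext heq
  rw [pow_eq_pow_iff_modEq, hord] at hu
  have hzz : z.val ≡ z'.val [MOD M k] := Nat.ModEq.add_left_cancel' b hu
  have : z.val = z'.val := by
    have h1 : z.val % M k = z'.val % M k := hzz
    rw [Nat.mod_eq_of_lt z.val_lt, Nat.mod_eq_of_lt z'.val_lt] at h1
    exact h1
  exact ZMod.val_injective _ this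

lemma seq_win_ne_zero (hk : 2 ≤ k) (hg : ∀ x : (Fq k)ˣ, x ∈ Subgroup.zpowers g)
    (hord : orderOf g = M k) (b : ℕ) (z : ZMod (M k)) :
    ¬ (∀ i : Fin k, seq g b (z + ((i : ℕ) : ZMod (M k))) = 0) := by
  intro h
  have : pw g (b + z.val) = 0 := by
    apply KLA' g hk hg
    intro i hik
    rw [pw_pow]
    have h1 : seq g b (z + ((i : ℕ) : ZMod (M k))) = 0 := h ⟨i, hik⟩
    rw [seq_at g hk hord] at h1
    exact h1
  exact pw_ne g _ this

lemma seq_win_surj (hk : 2 ≤ k) (hg : ∀ x : (Fq k)ˣ, x ∈ Subgroup.zpowers g)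
    (hord : orderOf g = M k) (b : ℕ) (x : Fin k → ZMod 2) (hx : x ≠ 0) :
    ∃ z : ZMod (M k), ∀ i : Fin k, seq g b (z + ((i : ℕ) : ZMod (M k))) = x i := by
  classical
  haveI : NeZero (M k) := neZeroM hk
  set Φ : ZMod (M k) → (Fin k → ZMod 2) := fun z i => seq g b (z + ((i : ℕ) : ZMod (M k))) with hΦ
  have hinj : Function.Injective Φ := by
    intro z z' hzz
    exact seq_win_inj g hk hg hord b (fun i => congrFun hzz i)
  set S : Finset (Fin k → ZMod 2) := Finset.univ.image Φ with hS
  have hcardS : S.card = M k := by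
    rw [hS, Finset.card_image_of_injective _ hinj, Finset.card_univ, ZMod.card]
  set T : Finset (Fin k → ZMod 2) := Finset.univ.erase 0 with hT
  have hcardT : T.card = M k := by
    rw [hT, Finset.card_erase_of_mem (Finset.mem_univ _), Finset.card_univ]
    rw [Fintype.card_fun, Fintype.card_fin]
    rfl
  have hST : S ⊆ T := by
    intro y hy
    rw [hS, Finset.mem_image] at hy
    obtain ⟨z, _, rfl⟩ := hy
    rw [hT, Finset.mem_erase]
    refine ⟨?_, Finset.mem_univ _⟩
    intro h0
    exact seq_win_ne_zero g hk hg hord b z (fun i => congrFun h0 i)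
  have hSe : S = T := Finset.eq_of_subset_of_card_le hST (by omega)
  have hxT : x ∈ T := by
    rw [hT, Finset.mem_erase]
    exact ⟨hx, Finset.mem_univ _⟩
  rw [← hSe, hS, Finset.mem_image] at hxT
  obtain ⟨z, _, hz⟩ := hxT
  exact ⟨z, fun i => congrFun hz i⟩

instance instNeZeroPow2 (k : ℕ) : NeZero (2 ^ k) := ⟨by positivity⟩

/-- the de Bruijn sequence: m-sequence with a zero inserted at position `2^k - 1`;
`b₀` is the alignment base exponent. -/
noncomputable def dB (b₀ : ℕ) : ZMod (2 ^ k) → ZMod 2 :=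
  fun x => if x.val = M k then 0 else seq g (b₀ + (k - 1)) ((x.val : ZMod (M k)))

section Aligned

/-- `seq` at a natural position -/
lemma s_nat (hk : 2 ≤ k) (hord : orderOf g = M k) (b₀ : ℕ) (a : ℕ) :
    seq g (b₀ + (k - 1)) ((a : ZMod (M k))) = trc (pw g (b₀ + (k - 1) + a)) := by
  haveI : NeZero (M k) := neZeroM hk
  show trc (pw g (b₀ + (k - 1) + ((a : ZMod (M k))).val)) = _
  congr 1
  apply pw_modEq g hord
  rw [ZMod.val_natCast]
  exact (Nat.mod_modEq a (M k)).add_left _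

lemma s_run (hk : 2 ≤ k) (hord : orderOf g = M k) (b₀ : ℕ)
    (Hrun : ∀ u : ℕ, u < k - 1 → trc (pw g (b₀ + u)) = 0)
    (w : ℕ) (h1 : 1 ≤ w) (h2 : w ≤ k - 1) :
    seq g (b₀ + (k - 1)) (((M k - w : ℕ) : ZMod (M k))) = 0 := by
  have h4 := two_pow_big (k := k) hk
  have hks : k ≤ 2 ^ k := (Nat.lt_two_pow_self (n := k)).le
  rw [s_nat g hk hord]
  have hcong : b₀ + (k - 1) + (M k - w) ≡ b₀ + (k - 1 - w) [MOD M k] := by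
    have : b₀ + (k - 1) + (M k - w) = b₀ + (k - 1 - w) + M k := by
      show b₀ + (k - 1) + (2 ^ k - 1 - w) = b₀ + (k - 1 - w) + (2 ^ k - 1)
      omega
    rw [this]
    exact (Nat.modEq_iff_dvd' (by omega)).mpr ⟨1, by omega⟩ |>.symm
  rw [pw_modEq g hord hcong]
  exact Hrun (k - 1 - w) (by omega)

lemma s_zero (hk : 2 ≤ k) (hord : orderOf g = M k) (b₀ : ℕ)
    (Hone : trc (pw g (b₀ + (k - 1))) = 1) :
    seq g (b₀ + (k - 1)) ((0 : ℕ) : ZMod (M k)) = 1 := by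
  rw [s_nat g hk hord]
  simpa using Hone

lemma dB_natCast (b₀ : ℕ) (a : ℕ) (ha : a < 2 ^ k) :
    dB g b₀ ((a : ZMod (2 ^ k)))
      = if a = M k then 0 else seq g (b₀ + (k - 1)) ((a : ZMod (M k))) := by
  rw [dB, ZMod.val_natCast_of_lt ha]

/-- window surjectivity of the de Bruijn sequence -/
lemma dB_surj (hk : 2 ≤ k) (hg : ∀ x : (Fq k)ˣ, x ∈ Subgroup.zpowers g)
    (hord : orderOf g = M k) (b₀ : ℕ)
    (Hrun : ∀ u : ℕ, u < k - 1 → trc (pw g (b₀ + u)) = 0)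
    (x : Fin k → ZMod 2) :
    ∃ p : ZMod (2 ^ k), ∀ i : Fin k, dB g b₀ (p + ((i : ℕ) : ZMod (2 ^ k))) = x i := by
  haveI : NeZero (M k) := neZeroM hk
  have h4 := two_pow_big (k := k) hk
  have hks : k ≤ 2 ^ k := (Nat.lt_two_pow_self (n := k)).le
  have hM : M k = 2 ^ k - 1 := rfl
  by_cases hx : x = 0
  · -- the all-zero window sits at position 2^k - k
    refine ⟨((2 ^ k - k : ℕ) : ZMod (2 ^ k)), ?_⟩
    intro i
    have hik := i.isLt
    have hcast : ((2 ^ k - k : ℕ) : ZMod (2 ^ k)) + ((i : ℕ) : ZMod (2 ^ k))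
        = ((2 ^ k - k + (i : ℕ) : ℕ) : ZMod (2 ^ k)) := by push_cast; ring
    rw [hcast, dB_natCast g b₀ _ (by omega), hx]
    by_cases hiM : 2 ^ k - k + (i : ℕ) = M k
    · simp [hiM]
    · rw [if_neg hiM]
      have hw : 2 ^ k - k + (i : ℕ) = M k - (k - 1 - (i : ℕ)) := by
        show _ = 2 ^ k - 1 - _
        omega
      rw [hw, s_run g hk hord b₀ Hrun (k - 1 - (i : ℕ)) (by omega) (by omega)]
      rfl
  · obtain ⟨j, hj⟩ := seq_win_surj g hk hg hord (b₀ + (k - 1)) x hx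
    by_cases hcase : j.val + k ≤ M k
    · -- no wrap-around
      refine ⟨((j.val : ℕ) : ZMod (2 ^ k)), ?_⟩
      intro i
      have hik := i.isLt
      have hcast : ((j.val : ℕ) : ZMod (2 ^ k)) + ((i : ℕ) : ZMod (2 ^ k))
          = ((j.val + (i : ℕ) : ℕ) : ZMod (2 ^ k)) := by push_cast; ring
      rw [hcast, dB_natCast g b₀ _ (by omega), if_neg (by omega)]
      have hji : j + ((i : ℕ) : ZMod (M k)) = ((j.val + (i : ℕ) : ℕ) : ZMod (M k)) := by
        push_cast [ZMod.natCast_rightInverse j]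
        ring
      rw [← hji]
      exact hj i
    · -- wrap-around
      set w := M k - j.val with hwdef
      have hjlt := j.val_lt
      have hw1 : 1 ≤ w := by omega
      have hwk : w ≤ k - 1 := by omega
      refine ⟨((2 ^ k - w : ℕ) : ZMod (2 ^ k)), ?_⟩
      intro i
      have hik := i.isLt
      have hji : j + ((i : ℕ) : ZMod (M k)) = ((j.val + (i : ℕ) : ℕ) : ZMod (M k)) := by
        push_cast [ZMod.natCast_rightInverse j]
        ring
      have hcast : ((2 ^ k - w : ℕ) : ZMod (2 ^ k)) + ((i : ℕ) : ZMod (2 ^ k))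
          = ((2 ^ k - w + (i : ℕ) : ℕ) : ZMod (2 ^ k)) := by push_cast; ring
      rw [hcast]
      rcases Nat.lt_or_ge (i : ℕ) w with hiw | hiw
      · -- both sides are zero
        have hrhs : x i = 0 := by
          rw [← hj i, hji]
          have he : j.val + (i : ℕ) = M k - (w - (i : ℕ)) := by omega
          rw [he]
          exact s_run g hk hord b₀ Hrun (w - (i : ℕ)) (by omega) (by omega)
        rw [hrhs, dB_natCast g b₀ _ (by omega)]
        by_cases hiM : 2 ^ k - w + (i : ℕ) = M k
        · simp [hiM]
        · rw [if_neg hiM]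
          have he2 : 2 ^ k - w + (i : ℕ) = M k - (w - 1 - (i : ℕ)) := by
            show _ = 2 ^ k - 1 - _
            omega
          rw [he2]
          exact s_run g hk hord b₀ Hrun (w - 1 - (i : ℕ)) (by omega) (by omega)
      · -- beyond the seam
        have hlt2 : 2 ^ k - w + (i : ℕ) < 2 ^ k + 2 ^ k := by omega
        have hv : ((2 ^ k - w + (i : ℕ) : ℕ) : ZMod (2 ^ k))
            = (((i : ℕ) - w : ℕ) : ZMod (2 ^ k)) := by
          have : 2 ^ k - w + (i : ℕ) = ((i : ℕ) - w) + 2 ^ k := by omega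
          rw [this, Nat.cast_add, ZMod.natCast_self, add_zero]
        rw [hv, dB_natCast g b₀ _ (by omega), if_neg (by omega)]
        have hrhs : x i = seq g (b₀ + (k - 1)) ((((i : ℕ) - w : ℕ) : ZMod (M k))) := by
          rw [← hj i, hji]
          congr 1
          have : j.val + (i : ℕ) = ((i : ℕ) - w) + M k := by omega
          rw [this, Nat.cast_add, ZMod.natCast_self, add_zero]
        rw [hrhs]

lemma dB_bij (hk : 2 ≤ k) (hg : ∀ x : (Fq k)ˣ, x ∈ Subgroup.zpowers g)
    (hord : orderOf g = M k) (b₀ : ℕ)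
    (Hrun : ∀ u : ℕ, u < k - 1 → trc (pw g (b₀ + u)) = 0) :
    ∀ x : Fin k → ZMod 2, ∃! p : ZMod (2 ^ k),
      ∀ i : Fin k, dB g b₀ (p + ((i : ℕ) : ZMod (2 ^ k))) = x i := by
  classical
  set V : ZMod (2 ^ k) → (Fin k → ZMod 2) :=
    fun p i => dB g b₀ (p + ((i : ℕ) : ZMod (2 ^ k))) with hV
  have hsurj : Function.Surjective V := by
    intro x
    obtain ⟨p, hp⟩ := dB_surj g hk hg hord b₀ Hrun x
    exact ⟨p, funext hp⟩
  have hbij : Function.Bijective V := by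
    rw [Fintype.bijective_iff_surjective_and_card]
    refine ⟨hsurj, ?_⟩
    rw [ZMod.card, Fintype.card_fun, Fintype.card_fin, ZMod.card]
  intro x
  obtain ⟨p, hp⟩ := hsurj x
  refine ⟨p, fun i => congrFun hp i, fun q hq => ?_⟩
  exact hbij.1 (by rw [hp]; exact funext hq)

lemma exists_aligned (hk : 2 ≤ k) :
    ∃ (g : (Fq k)ˣ) (b₀ : ℕ), (∀ x, x ∈ Subgroup.zpowers g) ∧ orderOf g = M k ∧
      (∀ u : ℕ, u < k - 1 → trc (pw g (b₀ + u)) = 0) ∧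
      trc (pw g (b₀ + (k - 1))) = 1 := by
  classical
  haveI : NeZero (M k) := neZeroM hk
  obtain ⟨g, hg⟩ := IsCyclic.exists_generator (α := (Fq k)ˣ)
  have hord : orderOf g = M k := by
    rw [orderOf_eq_card_of_forall_mem_zpowers hg, Nat.card_eq_fintype_card,
      Fintype.card_units, PF18F.card_Fq (by omega)]
  classical
  set e : Fin k → ZMod 2 := Function.update (0 : Fin k → ZMod 2) ⟨k - 1, by omega⟩ 1 with he
  have hene : e ≠ 0 := by
    intro h0
    have h1 := congrFun h0 ⟨k - 1, by omega⟩
    rw [he, Function.update_self] at h1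
    exact one_ne_zero h1
  obtain ⟨j₀, hj₀⟩ := seq_win_surj g hk hg hord 0 e hene
  refine ⟨g, j₀.val, hg, hord, ?_, ?_⟩
  · intro u hu
    have h1 : seq g 0 (j₀ + ((u : ℕ) : ZMod (M k))) = e ⟨u, by omega⟩ := hj₀ ⟨u, by omega⟩
    rw [seq_at g hk hord] at h1
    have h2 : (0 : ℕ) + j₀.val + u = j₀.val + u := by omega
    rw [h2] at h1
    rw [h1, he, Function.update_of_ne (by
      intro hcon
      have := Fin.mk.injEq .. ▸ hcon
      have h3 : u = k - 1 := Fin.mk.inj_iff.mp hcon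
      omega)]
    rfl
  · have h1 : seq g 0 (j₀ + (((k - 1 : ℕ)) : ZMod (M k))) = e ⟨k - 1, by omega⟩ :=
      hj₀ ⟨k - 1, by omega⟩
    rw [seq_at g hk hord] at h1
    have h2 : (0 : ℕ) + j₀.val + (k - 1) = j₀.val + (k - 1) := by omega
    rw [h2] at h1
    rw [h1, he, Function.update_self]

lemma dB_parities (hk : 2 ≤ k) (hg : ∀ x : (Fq k)ˣ, x ∈ Subgroup.zpowers g)
    (hord : orderOf g = M k) (b₀ : ℕ)
    (Hrun : ∀ u : ℕ, u < k - 1 → trc (pw g (b₀ + u)) = 0)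
    (Hone : trc (pw g (b₀ + (k - 1))) = 1) :
    (∑ v ∈ Finset.range (2 ^ k), dB g b₀ ((v : ℕ) : ZMod (2 ^ k))) = 0 ∧
    (∑ v ∈ Finset.range (2 ^ k), ∑ j ∈ Finset.range v, dB g b₀ ((j : ℕ) : ZMod (2 ^ k))) = 1 := by
  haveI : NeZero (M k) := neZeroM hk
  have h4 := two_pow_big (k := k) hk
  have hks : k ≤ 2 ^ k := (Nat.lt_two_pow_self (n := k)).le
  have hM : M k = 2 ^ k - 1 := rfl
  have hF2aa : ∀ a : ZMod 2, a + a = 0 := by decide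
  have hF2tel : ∀ a b c : ZMod 2, (a + c) + (b + a) = b + c := by decide
  have hF2add0 : ∀ a b : ZMod 2, a + b = 0 → a = b := by decide
  set gg : Fq k := (g : Fq k) with hgg
  have hggM : gg ^ (M k) = 1 := by
    rw [hgg, ← Units.val_pow_eq_pow_val, ← hord, pow_orderOf_eq_one, Units.val_one]
  have hggne0 : gg ≠ 0 := Units.ne_zero g
  have hggne1 : gg ≠ 1 := by
    intro h1
    have hgu : g = 1 := Units.ext (by rw [← hgg, h1, Units.val_one])
    rw [hgu, orderOf_one] at hord
    omega
  have hone_add : (1 : Fq k) + gg ≠ 0 := by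
    intro h0
    have h2 : gg = -1 := by
      have := eq_neg_of_add_eq_zero_right h0
      exact this
    have hc2 : (2 : Fq k) = 0 := by
      have := CharP.cast_eq_zero (Fq k) 2
      exact_mod_cast this
    have h3 : (-1 : Fq k) = 1 := by linear_combination -hc2
    exact hggne1 (by rw [h2, h3])
  set γ : Fq k := pw g (b₀ + (k - 1)) * (1 + gg)⁻¹ with hγ
  have hγne : γ ≠ 0 := mul_ne_zero (pw_ne g _) (inv_ne_zero hone_add)
  set T : ℕ → ZMod 2 := fun a => trc (γ * gg ^ a) with hT
  have hstep : ∀ a : ℕ, T (a + 1) + T a = trc (pw g (b₀ + (k - 1) + a)) := by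
    intro a
    show trc (γ * gg ^ (a + 1)) + trc (γ * gg ^ a) = _
    rw [← trc_add]
    congr 1
    have h5 : γ * gg ^ (a + 1) + γ * gg ^ a = (γ * (1 + gg)) * gg ^ a := by ring
    rw [h5, hγ, mul_assoc _ _ (1 + gg), inv_mul_cancel₀ hone_add, mul_one, hgg, pw_pow]
  have hdval : ∀ v : ℕ, v < M k → dB g b₀ ((v : ℕ) : ZMod (2 ^ k)) = T (v + 1) + T v := by
    intro v hv
    rw [dB_natCast g b₀ v (by omega), if_neg (by omega), s_nat g hk hord, hstep]
  have hdM : dB g b₀ (((M k : ℕ)) : ZMod (2 ^ k)) = 0 := by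
    rw [dB_natCast g b₀ _ (by omega), if_pos rfl]
  have hTM : T (M k) = T 0 := by
    show trc (γ * gg ^ M k) = trc (γ * gg ^ 0)
    rw [hggM, pow_zero]
  have hpartial : ∀ v : ℕ, v ≤ M k →
      (∑ j ∈ Finset.range v, dB g b₀ ((j : ℕ) : ZMod (2 ^ k))) = T v + T 0 := by
    intro v
    induction v with
    | zero => intro _; simp [(hF2aa (T 0)).symm]
    | succ v ih =>
      intro hv
      rw [Finset.sum_range_succ, ih (by omega), hdval v (by omega)]
      exact hF2tel _ _ _
  -- T 0 = 1
  have hT0 : T 0 = 1 := by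
    rcases (by decide : ∀ a : ZMod 2, a = 0 ∨ a = 1) (T 0) with h0 | h1
    · exfalso
      have hconst : ∀ u : ℕ, u ≤ k - 1 → T (M k - (k - 1) + u) = T (M k - (k - 1)) := by
        intro u
        induction u with
        | zero => intro _; rfl
        | succ u ih =>
          intro hu
          have h5 := hstep (M k - (k - 1) + u)
          have h6 : trc (pw g (b₀ + (k - 1) + (M k - (k - 1) + u))) = 0 := by
            have hcong : b₀ + (k - 1) + (M k - (k - 1) + u) ≡ b₀ + u [MOD M k] := by
              have he : b₀ + (k - 1) + (M k - (k - 1) + u) = b₀ + u + M k := by omega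
              rw [he]
              exact (Nat.modEq_iff_dvd' (by omega)).mpr ⟨1, by omega⟩ |>.symm
            rw [pw_modEq g hord hcong]
            exact Hrun u (by omega)
          rw [h6] at h5
          have h7 := hF2add0 _ _ h5
          have he2 : M k - (k - 1) + (u + 1) = (M k - (k - 1) + u) + 1 := by omega
          rw [he2, h7, ih (by omega)]
      have h8 : T (M k - (k - 1)) = 0 := by
        have h9 := hconst (k - 1) le_rfl
        have he3 : M k - (k - 1) + (k - 1) = M k := by omega
        rw [he3] at h9
        rw [← h9, hTM, h0]
      have hwinzero : ∀ i, i < k → trc ((γ * gg ^ (M k - (k - 1))) * gg ^ i) = 0 := by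
        intro i hik
        have h7 := hconst i (by omega)
        have h10 : trc ((γ * gg ^ (M k - (k - 1))) * gg ^ i) = T (M k - (k - 1) + i) := by
          show _ = trc (γ * gg ^ (M k - (k - 1) + i))
          rw [mul_assoc, ← pow_add]
        rw [h10, h7, h8]
      have h11 := KLA' g hk hg hwinzero
      exact (mul_ne_zero hγne (pow_ne_zero _ hggne0)) h11
    · exact h1
  constructor
  · rw [show Finset.range (2 ^ k) = Finset.range (M k + 1) from by rw [hM]; congr 1; omega]
    rw [Finset.sum_range_succ, hdM, add_zero, hpartial (M k) le_rfl, hTM]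
    exact hF2aa (T 0)
  · rw [show Finset.range (2 ^ k) = Finset.range (M k + 1) from by rw [hM]; congr 1; omega]
    rw [Finset.sum_congr rfl (fun v hv => hpartial v (by
      have := Finset.mem_range.mp hv
      omega))]
    rw [Finset.sum_add_distrib, Finset.sum_const, Finset.card_range]
    have hgeo : (∑ v ∈ Finset.range (M k), gg ^ v) = 0 := by
      have h12 := geom_sum_eq hggne1 (M k)
      rw [h12, hggM, sub_self, zero_div]
    have hTsum : (∑ v ∈ Finset.range (M k + 1), T v) = 1 := by
      rw [Finset.sum_range_succ, hTM]
      have h13 : (∑ v ∈ Finset.range (M k), T v) = 0 := by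
        have h13a : (∑ v ∈ Finset.range (M k), T v)
            = trc (∑ v ∈ Finset.range (M k), γ * gg ^ v) :=
          (map_sum (Algebra.trace (ZMod 2) (Fq k)) (fun v => γ * gg ^ v)
            (Finset.range (M k))).symm
        rw [h13a, ← Finset.mul_sum, hgeo, mul_zero]
        exact map_zero (Algebra.trace (ZMod 2) (Fq k))
      rw [h13, zero_add, hT0]
    rw [hTsum]
    have hsmul : (M k + 1) • T 0 = 0 := by
      have h14 : M k + 1 = 2 ^ k := by omega
      rw [h14, nsmul_eq_mul]
      have h15 : ((2 ^ k : ℕ) : ZMod 2) = 0 := by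
        rw [ZMod.natCast_eq_zero_iff]
        exact dvd_pow_self 2 (by omega)
      rw [h15, zero_mul]
    rw [hsmul, add_zero]

end Aligned

theorem deBruijn_core (k : ℕ) (hk : 2 ≤ k) :
    ∃ d : ZMod (2 ^ k) → ZMod 2,
      (∀ x : Fin k → ZMod 2, ∃! p : ZMod (2 ^ k),
        ∀ i : Fin k, d (p + ((i : ℕ) : ZMod (2 ^ k))) = x i) ∧
      (∑ v ∈ Finset.range (2 ^ k), d ((v : ℕ) : ZMod (2 ^ k))) = 0 ∧
      (∑ v ∈ Finset.range (2 ^ k), ∑ j ∈ Finset.range v, d ((j : ℕ) : ZMod (2 ^ k))) = 1 := by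
  obtain ⟨g, b₀, hg, hord, Hrun, Hone⟩ := exists_aligned (k := k) hk
  obtain ⟨h1, h2⟩ := dB_parities g hk hg hord b₀ Hrun Hone
  exact ⟨dB g b₀, dB_bij g hk hg hord b₀ Hrun, h1, h2⟩

end DB

namespace PF18

abbrev F2 := ZMod 2

variable {N : ℕ}

/-- cyclic difference operator -/
def del (s : ZMod N → F2) : ZMod N → F2 := fun x => s (x + 1) + s x

/-- canonical integral (partial sums) -/
def intg (s : ZMod N → F2) : ZMod N → F2 := fun x => ∑ j ∈ Finset.range x.val, s (j : ZMod N)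

/-- total sum -/
def SumAll [NeZero N] (s : ZMod N → F2) : F2 := ∑ x, s x

lemma F2_cases : ∀ a : F2, a = 0 ∨ a = 1 := by decide

lemma cast_bij [NeZero N] : Function.Bijective (fun i : Fin N => ((i : ℕ) : ZMod N)) := by
  constructor
  · intro a b h
    have h' : (((a : ℕ) : ZMod N)).val = (((b : ℕ) : ZMod N)).val := congrArg ZMod.val h
    rw [ZMod.val_natCast_of_lt a.isLt, ZMod.val_natCast_of_lt b.isLt] at h'
    exact Fin.ext h'
  · intro x
    exact ⟨⟨x.val, x.val_lt⟩, ZMod.natCast_rightInverse x⟩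

lemma sum_univ_eq_range [NeZero N] (f : ZMod N → F2) :
    SumAll f = ∑ j ∈ Finset.range N, f (j : ZMod N) := by
  rw [← Fin.sum_univ_eq_sum_range (fun j => f (j : ZMod N)) N]
  show ∑ x : ZMod N, f x = ∑ i : Fin N, f ((i : ℕ) : ZMod N)
  exact (Fintype.sum_bijective (fun i : Fin N => ((i : ℕ) : ZMod N)) cast_bij
    (fun i : Fin N => f ((i : ℕ) : ZMod N)) f (fun i => rfl)).symm

lemma sum_shift [NeZero N] (s : ZMod N → F2) (y : ZMod N) :
    ∑ j ∈ Finset.range N, s (y + (j : ℕ)) = SumAll s := by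
  have h1 : SumAll (fun x => s (y + x)) = ∑ j ∈ Finset.range N, s (y + (j : ℕ)) :=
    sum_univ_eq_range (fun x => s (y + x))
  rw [← h1]
  show ∑ x, s (y + x) = ∑ x, s x
  exact Fintype.sum_equiv (Equiv.addLeft y) _ _ (fun x => rfl)

lemma del_add_const (s : ZMod N → F2) (c : F2) :
    del (fun x => s x + c) = del s := by
  funext x
  have : ∀ a b c : F2, a + c + (b + c) = a + b := by decide
  simpa [del] using this _ _ c

lemma del_iterate_two_pow (m : ℕ) (s : ZMod N → F2) (x : ZMod N) :
    del^[2 ^ m] s x = s (x + (2 ^ m : ℕ)) + s x := by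
  induction m generalizing s x with
  | zero => simp [del]
  | succ m ih =>
    have hsplit : (2 : ℕ) ^ (m + 1) = 2 ^ m + 2 ^ m := by ring
    rw [hsplit, Function.iterate_add_apply]
    rw [ih (del^[2 ^ m] s) x, ih s (x + (2 ^ m : ℕ)), ih s x]
    have hc : x + (2 ^ m : ℕ) + (2 ^ m : ℕ) = x + ((2 ^ m + 2 ^ m : ℕ) : ZMod N) := by
      push_cast; ring
    rw [hc]
    have : ∀ a b c : F2, a + c + (c + b) = a + b := by decide
    exact this _ _ (s (x + (2 ^ m : ℕ)))

lemma del_iterate_sum (m : ℕ) (s : ZMod N → F2) (x : ZMod N) :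
    del^[2 ^ m - 1] s x = ∑ j ∈ Finset.range (2 ^ m), s (x + (j : ℕ)) := by
  induction m generalizing s x with
  | zero => simp
  | succ m ih =>
    have hsplit : (2 : ℕ) ^ (m + 1) - 1 = (2 ^ m - 1) + 2 ^ m := by
      have h1 : (1 : ℕ) ≤ 2 ^ m := Nat.one_le_two_pow
      have h2 : (2 : ℕ) ^ (m + 1) = 2 ^ m + 2 ^ m := by ring
      omega
    rw [hsplit, Function.iterate_add_apply, ih]
    have hL1 : ∀ j : ℕ, (del^[2 ^ m] s) (x + (j : ℕ)) =
        s (x + (j : ℕ)) + s (x + ((2 ^ m + j : ℕ) : ZMod N)) := by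
      intro j
      rw [del_iterate_two_pow]
      have hc : x + (j : ℕ) + (2 ^ m : ℕ) = x + ((2 ^ m + j : ℕ) : ZMod N) := by
        push_cast; ring
      rw [hc, add_comm]
    calc ∑ j ∈ Finset.range (2 ^ m), (del^[2 ^ m] s) (x + (j : ℕ))
        = ∑ j ∈ Finset.range (2 ^ m), (s (x + (j : ℕ)) + s (x + ((2 ^ m + j : ℕ) : ZMod N))) := by
          exact Finset.sum_congr rfl (fun j _ => hL1 j)
      _ = ∑ j ∈ Finset.range (2 ^ m), s (x + (j : ℕ))
            + ∑ j ∈ Finset.range (2 ^ m), s (x + ((2 ^ m + j : ℕ) : ZMod N)) := by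
          rw [Finset.sum_add_distrib]
      _ = ∑ j ∈ Finset.range (2 ^ m + 2 ^ m), s (x + (j : ℕ)) := by
          rw [Finset.sum_range_add (fun j => s (x + (j : ℕ))) (2 ^ m) (2 ^ m)]
      _ = ∑ j ∈ Finset.range (2 ^ (m + 1)), s (x + (j : ℕ)) := by
          congr 1
          ring

/-- del-iterate to the full sum, on `ZMod (2^k)`. -/
lemma del_iterate_top (k : ℕ) (s : ZMod (2 ^ k) → F2) (x : ZMod (2 ^ k)) :
    del^[2 ^ k - 1] s x = SumAll s := by
  haveI : NeZero (2 ^ k) := ⟨(Nat.pos_of_ne_zero (by positivity)).ne'⟩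
  rw [del_iterate_sum, sum_shift]

lemma intg_zero (s : ZMod N → F2) : intg s 0 = 0 := by
  simp [intg, ZMod.val_zero]

lemma del_intg [NeZero N] {s : ZMod N → F2} (hs : SumAll s = 0) :
    del (intg s) = s := by
  funext x
  have hx := x.val_lt
  have hxc : ((x.val : ℕ) : ZMod N) = x := ZMod.natCast_rightInverse x
  by_cases h : x.val + 1 < N
  · have hv : (x + 1).val = x.val + 1 := by
      have : ((x.val + 1 : ℕ) : ZMod N) = x + 1 := by push_cast [hxc]; ring
      rw [← this, ZMod.val_natCast_of_lt h]
    have : intg s (x + 1) = intg s x + s x := by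
      rw [intg, intg, hv, Finset.sum_range_succ, hxc]
    rw [del, this]
    have h2 : ∀ a b : F2, a + b + a = b := by decide
    exact h2 _ _
  · have hval : x.val = N - 1 := by omega
    have hx1 : x + 1 = 0 := by
      have : ((x.val + 1 : ℕ) : ZMod N) = x + 1 := by push_cast [hxc]; ring
      rw [← this]
      have : x.val + 1 = N := by omega
      rw [this, ZMod.natCast_self]
    have hsum : ∑ j ∈ Finset.range N, s (j : ZMod N) = 0 := by
      rw [← sum_univ_eq_range]; exact hs
    have hN : N = x.val + 1 := by omega
    rw [del, hx1, intg_zero, intg]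
    have : (0 : F2) = ∑ j ∈ Finset.range (x.val + 1), s (j : ZMod N) := by
      rw [← hN, hsum]
    rw [Finset.sum_range_succ, hxc] at this
    have h3 : ∀ a b : F2, (0:F2) = a + b → (0 : F2) + a = b := by decide
    exact h3 _ _ this

lemma even_seqWeight_iff [NeZero N] (s : ZMod N → F2) :
    Even (seqWeight s) ↔ SumAll s = 0 := by
  classical
  have h1 : SumAll s = ∑ x : ZMod N, (if s x = 1 then (1 : F2) else 0) := by
    refine Finset.sum_congr rfl (fun x _ => ?_)
    rcases F2_cases (s x) with h | h <;> simp [h]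
  rw [h1, Finset.sum_boole]
  have h2 : seqWeight s = (Finset.filter (fun x => s x = 1) Finset.univ).card := by
    rw [seqWeight, Set.ncard_eq_toFinset_card']
    congr 1
    ext x
    simp
  rw [h2, ZMod.natCast_eq_zero_iff]
  constructor
  · intro h; exact even_iff_two_dvd.mp h
  · intro h; exact even_iff_two_dvd.mpr h


/-! ### Tuple lemmas -/

/-- tuple difference -/
def DT {n : ℕ} (x : Fin (n + 1) → F2) : Fin n → F2 := fun i => x i.succ + x i.castSucc

lemma DT_det {n : ℕ} {x y : Fin (n + 1) → F2} (h0 : x 0 = y 0)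
    (hD : ∀ i : Fin n, DT x i = DT y i) : ∀ i, x i = y i := by
  intro i
  induction i using Fin.induction with
  | zero => exact h0
  | succ j ih =>
    have h1 := hD j
    rw [DT, DT] at h1
    have h2 : ∀ a b c d : F2, a + b = c + d → b = d → a = c := by decide
    exact h2 _ _ _ _ h1 ih

lemma DT_window {n : ℕ} (T : ZMod N → F2) (q : ZMod N) (i : Fin n) :
    DT (fun i : Fin (n + 1) => T (q + ((i : ℕ) : ZMod N))) i
      = del T (q + ((i : ℕ) : ZMod N)) := by
  show T (q + ((i.succ : ℕ) : ZMod N)) + T (q + ((i.castSucc : ℕ) : ZMod N)) = _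
  have hc : q + (((i : ℕ) + 1 : ℕ) : ZMod N) = (q + ((i : ℕ) : ZMod N)) + 1 := by
    push_cast; ring
  rw [Fin.val_succ, Fin.coe_castSucc, hc]
  rfl

lemma window_del {n : ℕ} {T u : ZMod N → F2} (hdel : del T = u) {q : ZMod N}
    {x : Fin (n + 1) → F2} (h : ∀ i : Fin (n + 1), T (q + ((i : ℕ) : ZMod N)) = x i) :
    ∀ i : Fin n, u (q + ((i : ℕ) : ZMod N)) = DT x i := by
  intro i
  have h1 : DT (fun i : Fin (n + 1) => T (q + ((i : ℕ) : ZMod N))) i = DT x i := by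
    rw [DT, DT]
    show T _ + T _ = _
    rw [h i.succ, h i.castSucc]
  rw [← h1, DT_window, hdel]

lemma window_ext {n : ℕ} {T u : ZMod N → F2} (hdel : del T = u) {q : ZMod N}
    {x : Fin (n + 1) → F2} (h0 : T (q + ((0 : Fin (n+1)) : ℕ)) = x 0)
    (hy : ∀ i : Fin n, u (q + ((i : ℕ) : ZMod N)) = DT x i) :
    ∀ i : Fin (n + 1), T (q + ((i : ℕ) : ZMod N)) = x i := by
  exact DT_det h0 (fun i => by rw [DT_window, hdel]; exact hy i)

/-! ### Perfect families -/

def GoodFam (n k : ℕ) {ι : Type} (F : ι → ZMod (2 ^ k) → F2) : Prop :=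
  ∀ x : Fin n → F2, ∃! p : ι × ZMod (2 ^ k),
    ∀ i : Fin n, F p.1 (p.2 + ((i : ℕ) : ZMod (2 ^ k))) = x i

lemma GoodFam_reindex {n k : ℕ} {ι κ : Type} (e : κ ≃ ι) {F : ι → ZMod (2 ^ k) → F2}
    (h : GoodFam n k F) : GoodFam n k (fun b => F (e b)) := by
  intro x
  obtain ⟨p, hp, hu⟩ := h x
  refine ⟨(e.symm p.1, p.2), ?_, ?_⟩
  · intro i
    simpa [Equiv.apply_symm_apply] using hp i
  · rintro ⟨b, q⟩ hbq
    have h2 : (e b, q) = p := hu (e b, q) hbq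
    have hb : e b = p.1 := by rw [← h2]
    have hq : q = p.2 := by rw [← h2]
    refine Prod.ext ?_ hq
    show b = e.symm p.1
    rw [← hb, Equiv.symm_apply_apply]

instance instNeZeroPow (k : ℕ) : NeZero (2 ^ k) := ⟨by positivity⟩

/-- the even lift family -/
def eLift {k : ℕ} {ι : Type} (F : ι → ZMod (2 ^ k) → F2) (p : ι × F2) :
    ZMod (2 ^ k) → F2 := fun z => intg (F p.1) z + p.2

lemma del_eLift {k : ℕ} {ι : Type} {F : ι → ZMod (2 ^ k) → F2}
    (hev : ∀ a, SumAll (F a) = 0) (p : ι × F2) : del (eLift F p) = F p.1 := by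
  show del (fun z => intg (F p.1) z + p.2) = F p.1
  rw [del_add_const, del_intg (hev p.1)]

theorem evenLift {n k : ℕ} {ι : Type} {F : ι → ZMod (2 ^ k) → F2}
    (hPF : GoodFam n k F) (hev : ∀ a, SumAll (F a) = 0) :
    GoodFam (n + 1) k (eLift F) := by
  intro x
  obtain ⟨p₀, hp₀, hu₀⟩ := hPF (DT x)
  have hF2a : ∀ a b : F2, a + (b + a) = b := by decide
  refine ⟨((p₀.1, x 0 + intg (F p₀.1) p₀.2), p₀.2), ?_, ?_⟩
  · refine window_ext (del_eLift hev _) ?_ (fun i => by rw [hp₀ i])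
    show intg (F p₀.1) (p₀.2 + (((0 : Fin (n+1)) : ℕ) : ZMod (2 ^ k))) + (x 0 + intg (F p₀.1) p₀.2) = x 0
    have hz : (((0 : Fin (n+1)) : ℕ) : ZMod (2 ^ k)) = 0 := by norm_num
    rw [hz, add_zero]
    exact hF2a _ _
  · rintro ⟨⟨b, ε⟩, q⟩ h
    have hDb := window_del (del_eLift hev (b, ε)) h
    have hbq : (b, q) = p₀ := hu₀ (b, q) (fun i => hDb i)
    have hb : b = p₀.1 := by rw [← hbq]
    have hq : q = p₀.2 := by rw [← hbq]
    subst hb; subst hq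
    have h00 : intg (F p₀.1) p₀.2 + ε = x 0 := by simpa [eLift] using h 0
    have hε : ∀ a xv e : F2, a + e = xv → e = xv + a := by decide
    refine Prod.ext (Prod.ext rfl ?_) rfl
    exact hε _ _ _ h00

lemma evenLift_inv {k c : ℕ} {ι : Type} {F : ι → ZMod (2 ^ k) → F2}
    (hev : ∀ a, SumAll (F a) = 0)
    (hinv : ∀ a, del^[c] (F a) = fun _ => (1 : F2)) (p : ι × F2) :
    del^[c + 1] (eLift F p) = fun _ => (1 : F2) := by
  rw [Function.iterate_succ_apply, del_eLift hev]
  exact hinv p.1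

lemma SumAll_add_const {k : ℕ} (hk : 1 ≤ k) (s : ZMod (2 ^ k) → F2) (c : F2) :
    SumAll (fun z => s z + c) = SumAll s := by
  rw [SumAll, SumAll, Finset.sum_add_distrib, Finset.sum_const]
  have hcard : (Finset.univ : Finset (ZMod (2 ^ k))).card = 2 ^ k := by
    rw [Finset.card_univ, ZMod.card]
  rw [hcard]
  have hz : (2 ^ k) • c = (0 : F2) := by
    rw [nsmul_eq_mul]
    have h3 : ((2 ^ k : ℕ) : F2) = 0 := by
      rw [ZMod.natCast_eq_zero_iff]
      exact dvd_pow_self 2 (by omega)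
    rw [h3, zero_mul]
  rw [hz, add_zero]

lemma del_const (c : F2) : del (fun _ : ZMod N => c) = fun _ => (0 : F2) := by
  funext x
  have : ∀ c : F2, c + c = 0 := by decide
  simpa [del] using this c

lemma del_iterate_const_one {j : ℕ} (hj : 1 ≤ j) :
    del^[j] (fun _ : ZMod N => (1 : F2)) = fun _ => (0 : F2) := by
  obtain ⟨j', rfl⟩ : ∃ j', j = j' + 1 := ⟨j - 1, by omega⟩
  rw [Function.iterate_succ_apply, del_const]
  exact Function.iterate_fixed (del_const 0 ▸ (by rw [del_const] : del (fun _ : ZMod N => (0:F2)) = fun _ => 0)) j'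

/-- parity from the invariant, below the top -/
lemma SumAll_eq_zero_of_inv {k c : ℕ} (hk : 1 ≤ k) {s : ZMod (2 ^ k) → F2}
    (hc : del^[c] s = fun _ => (1 : F2)) (hlt : c ≤ 2 ^ k - 2) : SumAll s = 0 := by
  have h1 : (2:ℕ) ≤ 2 ^ k := Nat.one_lt_two_pow_iff.mpr (by omega)
  have hsplit : (2 ^ k - 1 - c) + c = 2 ^ k - 1 := by omega
  have : SumAll s = del^[2 ^ k - 1] s 0 := (del_iterate_top k s 0).symm
  rw [this, ← hsplit, Function.iterate_add_apply, hc,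
    del_iterate_const_one (by omega)]

/-- odd at the top of the invariant range -/
lemma SumAll_eq_one_of_inv {k : ℕ} {s : ZMod (2 ^ k) → F2}
    (hc : del^[2 ^ k - 1] s = fun _ => (1 : F2)) : SumAll s = 1 := by
  have : SumAll s = del^[2 ^ k - 1] s 0 := (del_iterate_top k s 0).symm
  rw [this, hc]

/-! ### Odd lift -/

/-- projection `ZMod (2^(k+1)) → ZMod (2^k)` -/
def pr (k : ℕ) : ZMod (2 ^ (k + 1)) →+* ZMod (2 ^ k) :=
  ZMod.castHom (pow_dvd_pow 2 (Nat.le_succ k)) (ZMod (2 ^ k))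

lemma pr_natCast (k : ℕ) (j : ℕ) : pr k ((j : ℕ) : ZMod (2 ^ (k + 1))) = (j : ZMod (2 ^ k)) :=
  map_natCast (pr k) j

/-- the odd lift family -/
def oLift {k : ℕ} {ι : Type} (F : ι → ZMod (2 ^ k) → F2) (a : ι) :
    ZMod (2 ^ (k + 1)) → F2 := intg (fun z => F a (pr k z))

lemma sum_comp_pr {k : ℕ} {ι : Type} (F : ι → ZMod (2 ^ k) → F2) (a : ι) :
    SumAll (fun z : ZMod (2 ^ (k + 1)) => F a (pr k z)) = 0 := by
  rw [sum_univ_eq_range]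
  have hsplit : Finset.range (2 ^ (k + 1)) = Finset.range (2 ^ k + 2 ^ k) := by
    congr 1
    ring
  rw [hsplit, Finset.sum_range_add]
  have h1 : ∀ j : ℕ, F a (pr k ((j : ℕ) : ZMod (2 ^ (k+1)))) = F a ((j : ZMod (2 ^ k))) := by
    intro j; rw [pr_natCast]
  have h2 : ∀ j : ℕ, F a (pr k (((2 ^ k + j : ℕ) : ZMod (2 ^ (k+1))))) = F a ((j : ZMod (2 ^ k))) := by
    intro j
    rw [pr_natCast, Nat.cast_add, ZMod.natCast_self, zero_add]
  calc (∑ j ∈ Finset.range (2 ^ k), F a (pr k ((j : ℕ) : ZMod (2 ^ (k+1)))))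
        + ∑ j ∈ Finset.range (2 ^ k), F a (pr k (((2 ^ k + j : ℕ) : ZMod (2 ^ (k+1)))))
      = (∑ j ∈ Finset.range (2 ^ k), F a ((j : ZMod (2 ^ k))))
        + ∑ j ∈ Finset.range (2 ^ k), F a ((j : ZMod (2 ^ k))) := by
        rw [Finset.sum_congr rfl (fun j _ => h1 j), Finset.sum_congr rfl (fun j _ => h2 j)]
    _ = 0 := by
        have : ∀ c : F2, c + c = 0 := by decide
        exact this _

lemma del_oLift {k : ℕ} {ι : Type} (F : ι → ZMod (2 ^ k) → F2) (a : ι) :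
    del (oLift F a) = fun z => F a (pr k z) :=
  del_intg (sum_comp_pr F a)

lemma oLift_inv {k : ℕ} {ι : Type} {F : ι → ZMod (2 ^ k) → F2}
    (hodd : ∀ a, SumAll (F a) = 1) (a : ι) :
    del^[2 ^ k] (oLift F a) = fun _ => (1 : F2) := by
  funext z
  have hsplit : (2:ℕ) ^ k = (2 ^ k - 1) + 1 := by
    have : (1:ℕ) ≤ 2 ^ k := Nat.one_le_two_pow
    omega
  rw [hsplit, Function.iterate_add_apply, Function.iterate_one, del_oLift]
  rw [del_iterate_sum k]
  have h1 : ∀ j : ℕ, F a (pr k (z + ((j : ℕ) : ZMod (2 ^ (k+1))))) = F a (pr k z + ((j : ℕ) : ZMod (2 ^ k))) := by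
    intro j
    rw [map_add, pr_natCast]
  rw [Finset.sum_congr rfl (fun j _ => h1 j), sum_shift]
  exact hodd a

lemma oLift_shift {k : ℕ} {ι : Type} {F : ι → ZMod (2 ^ k) → F2}
    (hodd : ∀ a, SumAll (F a) = 1) (a : ι) (z : ZMod (2 ^ (k + 1))) :
    oLift F a (z + ((2 ^ k : ℕ) : ZMod (2 ^ (k + 1)))) = oLift F a z + 1 := by
  have h := del_iterate_two_pow k (oLift F a) z
  rw [oLift_inv hodd a] at h
  have h2 : ∀ p q : F2, p + q = 1 → p = q + 1 := by decide
  exact h2 _ _ h.symm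

lemma pr_fiber {k : ℕ} {q q' : ZMod (2 ^ (k + 1))} (h : pr k q = pr k q') :
    q = q' ∨ q = q' + ((2 ^ k : ℕ) : ZMod (2 ^ (k + 1))) := by
  set r := q - q' with hr
  have hpr : pr k r = 0 := by rw [hr, map_sub, h, sub_self]
  have hv : ((r.val : ℕ) : ZMod (2 ^ k)) = 0 := by
    have h1 : ((r.val : ℕ) : ZMod (2 ^ (k + 1))) = r := ZMod.natCast_rightInverse r
    calc ((r.val : ℕ) : ZMod (2 ^ k))
        = pr k ((r.val : ℕ) : ZMod (2 ^ (k + 1))) := (pr_natCast k r.val).symm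
      _ = pr k r := by rw [h1]
      _ = 0 := hpr
  rw [ZMod.natCast_eq_zero_iff] at hv
  have hlt : r.val < 2 ^ (k + 1) := r.val_lt
  have h2 : (2:ℕ) ^ (k + 1) = 2 ^ k + 2 ^ k := by ring
  have : r.val = 0 ∨ r.val = 2 ^ k := by
    rcases hv with ⟨c, hc⟩
    have hc2 : c ≤ 1 := by
      by_contra hcon
      have : 2 ^ k * 2 ≤ 2 ^ k * c := Nat.mul_le_mul_left _ (by omega)
      omega
    interval_cases c <;> omega
  rcases this with h0 | hK
  · left
    have : r = 0 := by
      have := ZMod.natCast_rightInverse r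
      rw [← this, h0, Nat.cast_zero]
    rw [hr] at this
    have := sub_eq_zero.mp this
    exact this
  · right
    have : r = ((2 ^ k : ℕ) : ZMod (2 ^ (k + 1))) := by
      have hh := ZMod.natCast_rightInverse r
      rw [← hh, hK]
    rw [hr] at this
    have h3 := sub_eq_iff_eq_add.mp this
    rw [h3]
    ring

theorem oddLift {m k : ℕ} {ι : Type} {F : ι → ZMod (2 ^ k) → F2}
    (hPF : GoodFam m k F) (hodd : ∀ a, SumAll (F a) = 1) :
    GoodFam (m + 1) (k + 1) (oLift F) := by
  intro x
  obtain ⟨p₀, hp₀, hu₀⟩ := hPF (DT x)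
  set t := oLift F p₀.1 with ht
  have hpr1 : pr k ((p₀.2.val : ℕ) : ZMod (2 ^ (k + 1))) = p₀.2 := by
    rw [pr_natCast]
    exact ZMod.natCast_rightInverse p₀.2
  obtain ⟨qs, hqs0, hqspr⟩ :
      ∃ qs : ZMod (2 ^ (k + 1)), t qs = x 0 ∧ pr k qs = p₀.2 := by
    set q₁ : ZMod (2 ^ (k + 1)) := ((p₀.2.val : ℕ) : ZMod (2 ^ (k + 1))) with hq₁
    by_cases hc : t q₁ = x 0
    · exact ⟨q₁, hc, hpr1⟩
    · refine ⟨q₁ + ((2 ^ k : ℕ) : ZMod (2 ^ (k + 1))), ?_, ?_⟩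
      · rw [ht, oLift_shift hodd]
        have hne : ∀ a b : F2, a ≠ b → a + 1 = b := by decide
        exact hne _ _ hc
      · rw [map_add, hpr1, pr_natCast, ZMod.natCast_self, add_zero]
  have hwin : ∀ i : Fin (m + 1), t (qs + ((i : ℕ) : ZMod (2 ^ (k + 1)))) = x i := by
    refine window_ext (del_oLift F p₀.1) ?_ ?_
    · show t (qs + (((0 : Fin (m + 1)) : ℕ) : ZMod (2 ^ (k + 1)))) = x 0
      have hz : (((0 : Fin (m + 1)) : ℕ) : ZMod (2 ^ (k + 1))) = 0 := by simp
      rw [hz, add_zero]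
      exact hqs0
    · intro i
      show F p₀.1 (pr k (qs + ((i : ℕ) : ZMod (2 ^ (k + 1))))) = DT x i
      rw [map_add, pr_natCast, hqspr]
      exact hp₀ i
  refine ⟨(p₀.1, qs), hwin, ?_⟩
  rintro ⟨b, q⟩ h
  have hDb : ∀ i : Fin m, F b (pr k q + ((i : ℕ) : ZMod (2 ^ k))) = DT x i := by
    intro i
    have h2 := window_del (del_oLift F b) h i
    rw [map_add, pr_natCast] at h2
    exact h2
  have hbq : (b, pr k q) = p₀ := hu₀ (b, pr k q) hDb
  have hb : b = p₀.1 := by rw [← hbq]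
  have hq : pr k q = p₀.2 := by rw [← hbq]
  subst hb
  have hfib := pr_fiber (k := k) (q := q) (q' := qs) (by rw [hq, hqspr])
  rcases hfib with rfl | hq2
  · rfl
  · exfalso
    have h0 : t q = x 0 := by
      have h00 := h 0
      have hz : (((0 : Fin (m + 1)) : ℕ) : ZMod (2 ^ (k + 1))) = 0 := by simp
      rw [hz, add_zero] at h00
      exact h00
    rw [hq2] at h0
    rw [ht, oLift_shift hodd] at h0
    rw [← ht] at h0
    rw [hqs0] at h0
    have hcontr : ∀ a : F2, a + 1 = a → False := by decide
    exact hcontr _ h0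

/-! ### Cardinality forced by GoodFam -/

lemma GoodFam_card {n k : ℕ} {ι : Type} [Fintype ι] {F : ι → ZMod (2 ^ k) → F2}
    (h : GoodFam n k F) : Fintype.card ι * 2 ^ k = 2 ^ n := by
  classical
  have hbij : Function.Bijective
      (fun p : ι × ZMod (2 ^ k) => (fun i : Fin n => F p.1 (p.2 + ((i : ℕ) : ZMod (2 ^ k)))
        : Fin n → F2)) := by
    constructor
    · intro p q hpq
      obtain ⟨pp, hp, hu⟩ := h (fun i => F p.1 (p.2 + ((i : ℕ) : ZMod (2 ^ k))))
      have h1 : p = pp := hu p (fun i => rfl)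
      have h2 : q = pp := hu q (fun i => (congrFun hpq i).symm)
      rw [h1, h2]
    · intro x
      obtain ⟨pp, hp, hu⟩ := h x
      exact ⟨pp, funext hp⟩
  have hcard := Fintype.card_of_bijective hbij
  rw [Fintype.card_prod, ZMod.card, Fintype.card_fun] at hcard
  rw [hcard, Fintype.card_fin, ZMod.card]

/-! ### The chain construction -/

theorem chain {m k : ℕ} {ι : Type} [Fintype ι] {F : ι → ZMod (2 ^ k) → F2}
    (hPF : GoodFam m k F) (hodd : ∀ a, SumAll (F a) = 1) :
    ∀ r : ℕ, 1 ≤ r → r ≤ 2 ^ k →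
      ∃ (κ : Type) (_ : Fintype κ) (G : κ → ZMod (2 ^ (k + 1)) → F2),
        GoodFam (m + r) (k + 1) G ∧
        (∀ a, del^[2 ^ k + (r - 1)] (G a) = fun _ => (1 : F2)) := by
  intro r
  induction r with
  | zero => omega
  | succ r ih =>
    intro _ hr2
    by_cases hr : r = 0
    · subst hr
      refine ⟨ι, inferInstance, oLift F, oddLift hPF hodd, ?_⟩
      intro a
      simpa using oLift_inv hodd a
    · obtain ⟨κ, hκ, G, hG, hinv⟩ := ih (by omega) (by omega)
      have h2 : (2:ℕ) ^ (k + 1) = 2 ^ k + 2 ^ k := by ring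
      have hev : ∀ a, SumAll (G a) = 0 := by
        intro a
        exact SumAll_eq_zero_of_inv (by omega) (hinv a) (by omega)
      refine ⟨κ × F2, inferInstance, eLift G, ?_, ?_⟩
      · have := evenLift hG hev
        have hmr : m + r + 1 = m + (r + 1) := by omega
        rwa [hmr] at this
      · intro p
        have := evenLift_inv hev hinv p
        have he : 2 ^ k + (r - 1) + 1 = 2 ^ k + (r + 1 - 1) := by omega
        rwa [he] at this

/-! ### de Bruijn input (constructed from finite fields below) -/

theorem deBruijn_exists (k : ℕ) (hk : 2 ≤ k) :
    ∃ d : ZMod (2 ^ k) → F2, GoodFam k k (fun _ : Fin 1 => d) ∧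
      SumAll d = 0 ∧ SumAll (intg d) = 1 := by
  obtain ⟨d, hbij, h1, h2⟩ := DB.deBruijn_core k hk
  refine ⟨d, ?_, ?_, ?_⟩
  · intro x
    obtain ⟨p, hp, hu⟩ := hbij x
    refine ⟨(⟨0, Nat.one_pos⟩, p), hp, ?_⟩
    rintro ⟨a, q⟩ hq
    have hqp : q = p := hu q hq
    subst hqp
    exact Prod.ext (Subsingleton.elim _ _) rfl
  · rw [sum_univ_eq_range]
    exact h1
  · rw [sum_univ_eq_range]
    have hcong : ∀ v ∈ Finset.range (2 ^ k),
        intg d ((v : ℕ) : ZMod (2 ^ k)) = ∑ j ∈ Finset.range v, d ((j : ℕ) : ZMod (2 ^ k)) := by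
      intro v hv
      show (∑ j ∈ Finset.range (((v : ℕ) : ZMod (2 ^ k))).val, d ((j : ℕ) : ZMod (2 ^ k))) = _
      rw [ZMod.val_natCast_of_lt (Finset.mem_range.mp hv)]
    rw [Finset.sum_congr rfl hcong]
    exact h2

theorem seed0 (k : ℕ) (hk : 2 ≤ k) :
    ∃ (κ : Type) (_ : Fintype κ) (G : κ → ZMod (2 ^ k) → F2),
      GoodFam (k + 1) k G ∧ ∀ a, SumAll (G a) = 1 := by
  obtain ⟨d, hPF, hev, hintg⟩ := deBruijn_exists k hk
  refine ⟨Fin 1 × F2, inferInstance, eLift (fun _ : Fin 1 => d),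
    evenLift hPF (fun _ => hev), ?_⟩
  rintro ⟨a, ε⟩
  have h1 : eLift (fun _ : Fin 1 => d) (a, ε) = fun z => intg d z + ε := rfl
  rw [h1, SumAll_add_const (by omega), hintg]

/-! ### odd seeds -/

theorem oddSeed : ∀ j u : ℕ,
    ∃ (κ : Type) (_ : Fintype κ) (G : κ → ZMod (2 ^ (j + u + 2)) → F2),
      GoodFam ((u + 3) + 2 ^ (u + 2) * (2 ^ j - 1)) (j + u + 2) G ∧
      ∀ a, SumAll (G a) = 1 := by
  intro j
  induction j with
  | zero =>
    intro u
    obtain ⟨κ, hκ, G, hG, hodd⟩ := seed0 (u + 2) (by omega)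
    refine ⟨κ, hκ, ?_⟩
    have e : (0:ℕ) + u + 2 = u + 2 := by omega
    rw [e]
    have e2 : (u + 3) + 2 ^ (u + 2) * (2 ^ 0 - 1) = u + 2 + 1 := by norm_num
    rw [e2]
    exact ⟨G, hG, hodd⟩
  | succ j ih =>
    intro u
    obtain ⟨κ, hκ, G, hG, hodd⟩ := ih u
    obtain ⟨κ', hκ', G', hG', hinv⟩ := chain hG hodd (2 ^ (j + u + 2))
      Nat.one_le_two_pow (le_refl _)
    refine ⟨κ', hκ', ?_⟩
    have e1 : (j + 1) + u + 2 = j + u + 2 + 1 := by omega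
    rw [e1]
    obtain ⟨c, hc⟩ := Nat.exists_eq_add_of_le (Nat.one_le_two_pow : (1:ℕ) ≤ 2 ^ j)
    have e2 : (u + 3) + 2 ^ (u + 2) * (2 ^ (j + 1) - 1)
        = (u + 3) + 2 ^ (u + 2) * (2 ^ j - 1) + 2 ^ (j + u + 2) := by
      have h1 : (2:ℕ) ^ (j + 1) = 2 * 2 ^ j := by ring
      have h2 : (2:ℕ) ^ (j + u + 2) = 2 ^ j * 2 ^ (u + 2) := by ring
      rw [h1, h2, hc]
      have h3 : 2 * (1 + c) - 1 = 2 * c + 1 := by omega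
      have h4 : (1 + c) - 1 = c := by omega
      rw [h3, h4]
      ring
    rw [e2]
    refine ⟨G', hG', ?_⟩
    intro a
    apply SumAll_eq_one_of_inv
    have hexp : 2 ^ (j + u + 2) + (2 ^ (j + u + 2) - 1) = 2 ^ (j + u + 2 + 1) - 1 := by
      have e5 : (2:ℕ) ^ (j + u + 2 + 1) = 2 ^ (j + u + 2) + 2 ^ (j + u + 2) := by ring
      have e6 : (1:ℕ) ≤ 2 ^ (j + u + 2) := Nat.one_le_two_pow
      omega
    rw [← hexp]
    exact hinv a

/-! ### coverage -/

lemma coverStep (j v n : ℕ) (h1 : ((v + 3) + 2 ^ (v + 2) * (2 ^ j - 1)) + 1 ≤ n)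
    (h2 : n ≤ ((v + 3) + 2 ^ (v + 2) * (2 ^ j - 1)) + 2 ^ (j + v + 2) - 1) :
    ∃ (κ : Type) (_ : Fintype κ) (G : κ → ZMod (2 ^ (j + v + 3)) → F2),
      GoodFam n (j + v + 3) G ∧ ∀ a, SumAll (G a) = 0 := by
  obtain ⟨κ, hκ, G, hG, hodd⟩ := oddSeed j v
  set S := (v + 3) + 2 ^ (v + 2) * (2 ^ j - 1) with hS
  set r := n - S with hr
  have hp : (1:ℕ) ≤ 2 ^ (j + v + 2) := Nat.one_le_two_pow
  obtain ⟨κ', hκ', G', hG', hinv⟩ := chain hG hodd r (by omega) (by omega)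
  have hn : S + r = n := by omega
  rw [hn] at hG'
  have e1 : j + v + 3 = j + v + 2 + 1 := by omega
  rw [e1]
  refine ⟨κ', hκ', G', hG', ?_⟩
  intro a
  refine SumAll_eq_zero_of_inv (by omega) (hinv a) ?_
  have e2 : (2:ℕ) ^ (j + v + 2 + 1) = 2 ^ (j + v + 2) + 2 ^ (j + v + 2) := by ring
  omega

theorem evenCover : ∀ j v n : ℕ,
    (j + v + 3) + 1 ≤ n →
    n ≤ ((v + 3) + 2 ^ (v + 2) * (2 ^ j - 1)) + 2 ^ (j + v + 2) - 1 →
    ∃ (κ : Type) (_ : Fintype κ) (G : κ → ZMod (2 ^ (j + v + 3)) → F2),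
      GoodFam n (j + v + 3) G ∧ ∀ a, SumAll (G a) = 0 := by
  intro j
  induction j with
  | zero =>
    intro v n hn1 hn2
    refine coverStep 0 v n ?_ hn2
    norm_num
    omega
  | succ j ih =>
    intro v n hn1 hn2
    by_cases hc : n ≤ ((v + 1 + 3) + 2 ^ (v + 1 + 2) * (2 ^ j - 1)) + 2 ^ (j + (v + 1) + 2) - 1
    · have hn1' : (j + (v + 1) + 3) + 1 ≤ n := by omega
      obtain ⟨κ, hκ, G, hG, hev⟩ := ih (v + 1) n hn1' hc
      refine ⟨κ, hκ, ?_⟩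
      have e : (j + 1) + v + 3 = j + (v + 1) + 3 := by omega
      rw [e]
      exact ⟨G, hG, hev⟩
    · push_neg at hc
      refine coverStep (j + 1) v n ?_ hn2
      obtain ⟨c, hx⟩ := Nat.exists_eq_add_of_le (Nat.one_le_two_pow : (1:ℕ) ≤ 2 ^ j)
      have hy : (1:ℕ) ≤ 2 ^ (v + 2) := Nat.one_le_two_pow
      have p1 : 2 ^ (v + 2) * (2 ^ (j + 1) - 1) = 2 * (2 ^ (v + 2) * c) + 2 ^ (v + 2) := by
        rw [show (2:ℕ) ^ (j + 1) = 2 * 2 ^ j by ring, hx,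
          show 2 * (1 + c) - 1 = 2 * c + 1 by omega]
        ring
      have p2 : (2:ℕ) ^ (v + 1 + 2) * (2 ^ j - 1) = 2 * (2 ^ (v + 2) * c) := by
        rw [show (2:ℕ) ^ (v + 1 + 2) = 2 * 2 ^ (v + 2) by ring, hx,
          show (1 + c) - 1 = c by omega]
        ring
      have p3 : (2:ℕ) ^ (j + (v + 1) + 2) = 2 * (2 ^ (v + 2) * c) + 2 * 2 ^ (v + 2) := by
        rw [show (2:ℕ) ^ (j + (v + 1) + 2) = 2 ^ j * (2 * 2 ^ (v + 2)) by ring, hx]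
        ring
      rw [p2, p3] at hc
      rw [p1]
      omega

/-! ### main assembly -/

theorem main_exists (k n : ℕ) (hk : 2 ≤ k) (hkn : k ≤ n) (hn : n ≤ 2 ^ k - 2) :
    ∃ (κ : Type) (_ : Fintype κ) (G : κ → ZMod (2 ^ k) → F2),
      GoodFam n k G ∧ ∀ a, SumAll (G a) = 0 := by
  rcases Nat.eq_or_lt_of_le hkn with heq | hlt
  · subst heq
    obtain ⟨d, hPF, hev, _⟩ := deBruijn_exists k hk
    exact ⟨Fin 1, inferInstance, fun _ => d, hPF, fun _ => hev⟩
  · -- n ≥ k + 1 forces k ≥ 3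
    have hk3 : 3 ≤ k := by
      by_contra hcon
      have hk2 : k = 2 := by omega
      subst hk2
      norm_num at hn
      omega
    obtain ⟨j, hj⟩ := Nat.exists_eq_add_of_le hk3  -- k = 3 + j
    have hj' : k = j + 0 + 3 := by omega
    subst hj'
    have harith : ((0 + 3) + 2 ^ (0 + 2) * (2 ^ j - 1)) + 2 ^ (j + 0 + 2) - 1
        = 2 ^ (j + 0 + 3) - 2 := by
      have q1 : (2:ℕ) ^ (j + 0 + 2) = 4 * 2 ^ j := by ring
      have q2 : (2:ℕ) ^ (j + 0 + 3) = 8 * 2 ^ j := by ring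
      have q3 : (1:ℕ) ≤ 2 ^ j := Nat.one_le_two_pow
      rw [q1, q2]
      norm_num
      omega
    refine evenCover j 0 n (by omega) ?_
    omega

end PF18

theorem stmt_18 (k n : ℕ) (hk : 1 ≤ k) (hkn : k ≤ n) (hn : n < 2 ^ k - 1) :
    ∃ F : Fin (2 ^ (n - k)) → (ZMod (2 ^ k) → ZMod 2),
      IsPF n k (2 ^ (n - k)) F ∧ ∀ a, Even (seqWeight (F a)) := by
  open PF18 in
  by_cases hk1 : k = 1
  · subst hk1
    norm_num at hn
    omega
  · have hk2 : 2 ≤ k := by omega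
    have hn2 : n ≤ 2 ^ k - 2 := by omega
    obtain ⟨κ, hκ, G, hG, hev⟩ := PF18.main_exists k n hk2 hkn hn2
    have hcard := PF18.GoodFam_card hG
    have hcard2 : Fintype.card κ = 2 ^ (n - k) := by
      have h1 : (2:ℕ) ^ (n - k) * 2 ^ k = 2 ^ n := by
        rw [← pow_add]
        congr 1
        omega
      have h2 : (0:ℕ) < 2 ^ k := Nat.pow_pos (by omega)
      exact Nat.eq_of_mul_eq_mul_right h2 (by rw [hcard, h1])
    obtain e := Fintype.equivFinOfCardEq hcard2
    refine ⟨fun b => G (e.symm b), ?_, ?_⟩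
    · exact PF18.GoodFam_reindex e.symm hG
    · intro a
      exact (PF18.even_seqWeight_iff _).mpr (hev _)
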